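/- Let L be symmetric with L 1ₙ = 0, V ∈ ℝ^{n×c} with Vᵀ1ₙ = 0, δ > 0, σ ∈ ℝ, and r ∈ ℝⁿ with 1ₙᵀ r = 0. Write L, V, r in partitioned form with last row/column removed (L̂, V̂, r̂). If ẑ* solves ((L̂ − σÎ) + (σ/n)·1̂1̂ᵀ + δ V̂V̂ᵀ) ẑ = r̂, then z* := [ẑ*; 0] − (1̂ᵀẑ*/n)·1ₙ satisfies (L + δVVᵀ − σI) z* = r and 1ₙᵀ z* = 0. -/

import Mathlib

open Matrix

theorem stmt_12 {m c : ℕ} (L : Matrix (Fin (m + 1)) (Fin (m + 1)) ℝ)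
    (V : Matrix (Fin (m + 1)) (Fin c) ℝ) (r : Fin (m + 1) → ℝ)
    (δ σ : ℝ) (hδ : 0 < δ)
    (hsymm : L.IsSymm) (hker : L.mulVec (1 : Fin (m + 1) → ℝ) = 0)
    (hV : Vᵀ.mulVec (1 : Fin (m + 1) → ℝ) = 0)
    (hr : (1 : Fin (m + 1) → ℝ) ⬝ᵥ r = 0)
    (zhat : Fin m → ℝ)
    (hsol : ((L.submatrix Fin.castSucc Fin.castSucc
          - σ • (1 : Matrix (Fin m) (Fin m) ℝ))
        + (σ / ((m : ℝ) + 1)) • vecMulVec 1 1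
        + δ • (V.submatrix Fin.castSucc id * (V.submatrix Fin.castSucc id)ᵀ)).mulVec zhat
      = fun j : Fin m => r j.castSucc) :
    (L + δ • (V * Vᵀ) - σ • (1 : Matrix (Fin (m + 1)) (Fin (m + 1)) ℝ)).mulVec
        (Fin.snoc zhat 0
          - (((1 : Fin m → ℝ) ⬝ᵥ zhat) / ((m : ℝ) + 1)) • (1 : Fin (m + 1) → ℝ)) = r ∧
    (1 : Fin (m + 1) → ℝ) ⬝ᵥ (Fin.snoc zhat 0
        - (((1 : Fin m → ℝ) ⬝ᵥ zhat) / ((m : ℝ) + 1)) • (1 : Fin (m + 1) → ℝ)) = 0 := by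
  have hnpos : (0:ℝ) < (m : ℝ) + 1 := by positivity
  have hnne : ((m : ℝ) + 1) ≠ 0 := ne_of_gt hnpos
  set n : ℝ := (m : ℝ) + 1 with hn
  set s : ℝ := (1 : Fin m → ℝ) ⬝ᵥ zhat with hs
  set A : Matrix (Fin (m+1)) (Fin (m+1)) ℝ := L + δ • (V * Vᵀ) - σ • 1 with hA
  set z : Fin (m+1) → ℝ := Fin.snoc zhat 0 - (s / n) • 1 with hz
  have hssum : s = ∑ k : Fin m, zhat k := by
    simp [hs, dotProduct]
  -- sum of z is zero
  have hzsum : (1 : Fin (m + 1) → ℝ) ⬝ᵥ z = 0 := by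
    simp only [hz, dotProduct, Pi.sub_apply, Pi.smul_apply, Pi.one_apply, smul_eq_mul,
      one_mul, Finset.sum_sub_distrib]
    rw [Fin.sum_univ_castSucc]
    simp only [Fin.snoc_castSucc, Fin.snoc_last, Finset.sum_const, Finset.card_univ,
      Fintype.card_fin, nsmul_eq_mul]
    rw [← hssum]
    field_simp
    rw [hn, Nat.cast_add, Nat.cast_one]; ring
  -- A applied to ones
  have hVV1 : (V * Vᵀ).mulVec (1 : Fin (m+1) → ℝ) = 0 := by
    rw [← mulVec_mulVec, hV, mulVec_zero]
  have hA1 : A.mulVec (1 : Fin (m+1) → ℝ) = (-σ) • (1 : Fin (m+1) → ℝ) := by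
    rw [hA, sub_mulVec, add_mulVec, hker, smul_mulVec, hVV1, smul_mulVec,
      one_mulVec]
    funext i
    simp
  have hAz : A.mulVec z = A.mulVec (Fin.snoc zhat 0) + (σ * s / n) • (1 : Fin (m+1) → ℝ) := by
    rw [hz, mulVec_sub, mulVec_smul, hA1]
    funext i
    simp
    ring
  -- key per-row fact for castSucc rows
  have hrow : ∀ j : Fin m, A.mulVec z j.castSucc = r j.castSucc := by
    intro j
    have h1 := congrFun hsol j
    simp only [mulVec, dotProduct, Matrix.add_apply, Matrix.sub_apply, Matrix.smul_apply,
      submatrix_apply, id, vecMulVec_apply, Pi.one_apply, transpose_apply,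
      smul_eq_mul, Matrix.mul_apply, Matrix.one_apply] at h1
    have h2 : A.mulVec (Fin.snoc zhat 0) j.castSucc
        = r j.castSucc - (σ / n) * s := by
      simp only [mulVec, dotProduct]
      rw [Fin.sum_univ_castSucc]
      simp only [Fin.snoc_castSucc, Fin.snoc_last, mul_zero, add_zero]
      rw [← h1, hssum, Finset.mul_sum, ← Finset.sum_sub_distrib]
      apply Finset.sum_congr rfl
      intro k _
      have hij : (j.castSucc = k.castSucc) = (j = k) := by
        simp [Fin.castSucc_inj]
      simp only [hA, Matrix.sub_apply, Matrix.add_apply, Matrix.smul_apply,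
        Matrix.one_apply, Matrix.mul_apply, transpose_apply, smul_eq_mul, hij]
      ring
    rw [hAz]
    simp only [Pi.add_apply, Pi.smul_apply, Pi.one_apply, smul_eq_mul, h2]
    ring
  -- total sum of A z is zero
  have hAsymm : Aᵀ = A := by
    rw [hA]
    simp only [transpose_sub, transpose_add, transpose_smul, transpose_mul,
      transpose_transpose, transpose_one, hsymm.eq]
  have htot : ∑ i, A.mulVec z i = 0 := by
    have : (1 : Fin (m+1) → ℝ) ⬝ᵥ A.mulVec z = 0 := by
      rw [dotProduct_mulVec, ← mulVec_transpose, hAsymm, hA1]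
      simp only [smul_dotProduct]
      rw [hzsum, smul_eq_mul, mul_zero]
    simpa [dotProduct] using this
  have hrtot : ∑ i, r i = 0 := by
    simpa [dotProduct] using hr
  have hlast : A.mulVec z (Fin.last m) = r (Fin.last m) := by
    have h1 : ∑ j : Fin m, A.mulVec z j.castSucc + A.mulVec z (Fin.last m) = 0 := by
      rw [← Fin.sum_univ_castSucc]; exact htot
    have h2 : ∑ j : Fin m, r j.castSucc + r (Fin.last m) = 0 := by
      rw [← Fin.sum_univ_castSucc]; exact hrtot
    have h3 : ∑ j : Fin m, A.mulVec z j.castSucc = ∑ j : Fin m, r j.castSucc :=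
      Finset.sum_congr rfl fun j _ => hrow j
    linarith
  constructor
  · funext i
    refine Fin.lastCases ?_ ?_ i
    · exact hlast
    · intro j; exact hrow j
  · exact hzsum
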